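/- arXiv:1503.02511 — 3 statements merged into one kernel-verified Lean document; each statement's English description precedes it below -/
import Mathlib

section
/- Let V be a finite-dimensional real inner product space, let W_1, ..., W_k be linear subspaces of V, and let K ⊆ V be a compact subset. Then for every nonzero vector v ∈ V such that v ∉ W_i for all 1 ≤ i ≤ k, there exists a real scalar λ such that the translate K + λv is contained in V \ (W_1 ∪ ... ∪ W_k), i.e. x + λ • v ∉ W_i for every x ∈ K and every 1 ≤ i ≤ k. -/
/-- **Translation lemma** (Lemma 4.2 of the paper).
Let `V` be a finite-dimensional real inner product (Euclidean) space,
`W 1, ..., W k` linear subspaces of `V`, and `K ⊆ V` a compact subset.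
Then for every nonzero vector `v ∈ V` with `v ∉ W i` for all `i`, there exists
a scalar `λ` such that the translate `K + λ • v` avoids all the subspaces `W i`. -/
theorem translate_compact_avoids_subspaces
    {V : Type*} [NormedAddCommGroup V] [InnerProductSpace ℝ V] [FiniteDimensional ℝ V]
    {k : ℕ} (W : Fin k → Submodule ℝ V)
    (K : Set V) (hK : IsCompact K)
    (v : V) (hv : v ≠ 0) (hvW : ∀ i, v ∉ W i) :
    ∃ lam : ℝ, ∀ x ∈ K, ∀ i, x + lam • v ∉ W i := by
  -- bound on K
  obtain ⟨C, hC⟩ : ∃ C, ∀ x ∈ K, ‖x‖ ≤ C := by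
    obtain ⟨C, hC⟩ := hK.isBounded.exists_norm_le
    exact ⟨C, hC⟩
  -- projections of v to orthogonal complements are nonzero
  have hPv : ∀ i, (Submodule.orthogonalProjectionOnto (W i)ᗮ v : V) ≠ 0 := by
    intro i h
    apply hvW i
    have := Submodule.orthogonalProjectionOnto_eq_zero_iff (K := (W i)ᗮ) (v := v)
    rw [Submodule.orthogonal_orthogonal] at this
    exact this.mp (by ext; simpa using h)
  have hPvpos : ∀ i, 0 < ‖(Submodule.orthogonalProjectionOnto (W i)ᗮ v : V)‖ := fun i =>
    norm_pos_iff.mpr (hPv i)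
  obtain ⟨M, hM⟩ : ∃ M : ℝ, ∀ i, C / ‖(Submodule.orthogonalProjectionOnto (W i)ᗮ v : V)‖ ≤ M :=
    Finite.exists_le _
  refine ⟨max M 0 + 1, fun x hx i hmem => ?_⟩
  set lam := max M 0 + 1 with hlam
  have hlampos : 0 < lam := by positivity
  -- project onto (W i)ᗮ
  have h0 : (Submodule.orthogonalProjectionOnto (W i)ᗮ (x + lam • v) : V) = 0 := by
    have := Submodule.orthogonalProjectionOnto_apply_of_mem_orthogonal
      ((W i).le_orthogonal_orthogonal hmem)
    simpa using congrArg (Subtype.val) this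
  rw [map_add, map_smul] at h0
  have heq : lam • (Submodule.orthogonalProjectionOnto (W i)ᗮ v : V)
      = -(Submodule.orthogonalProjectionOnto (W i)ᗮ x : V) := by
    have h1 : ((Submodule.orthogonalProjectionOnto (W i)ᗮ x : V) + lam • (Submodule.orthogonalProjectionOnto (W i)ᗮ v : V)) = 0 := by
      push_cast at h0
      exact h0
    rw [eq_neg_iff_add_eq_zero, add_comm]
    exact h1
  have hnorm : lam * ‖(Submodule.orthogonalProjectionOnto (W i)ᗮ v : V)‖ ≤ C := by
    have h1 : ‖lam • (Submodule.orthogonalProjectionOnto (W i)ᗮ v : V)‖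
        = ‖(Submodule.orthogonalProjectionOnto (W i)ᗮ x : V)‖ := by rw [heq, norm_neg]
    rw [norm_smul, Real.norm_eq_abs, abs_of_pos hlampos] at h1
    calc lam * ‖(Submodule.orthogonalProjectionOnto (W i)ᗮ v : V)‖
        = ‖(Submodule.orthogonalProjectionOnto (W i)ᗮ x : V)‖ := h1
      _ ≤ ‖x‖ := by
          have h2 := (Submodule.orthogonalProjectionOnto (W i)ᗮ).le_opNorm x
          have h3 := Submodule.orthogonalProjectionOnto_norm_le (W i)ᗮ
          calc ‖(Submodule.orthogonalProjectionOnto (W i)ᗮ x : V)‖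
              = ‖Submodule.orthogonalProjectionOnto (W i)ᗮ x‖ := rfl
            _ ≤ ‖Submodule.orthogonalProjectionOnto (W i)ᗮ‖ * ‖x‖ := h2
            _ ≤ 1 * ‖x‖ := by
                have := norm_nonneg x
                nlinarith
            _ = ‖x‖ := one_mul _
      _ ≤ C := hC x hx
  have hlt : C / ‖(Submodule.orthogonalProjectionOnto (W i)ᗮ v : V)‖ < lam := by
    calc C / ‖(Submodule.orthogonalProjectionOnto (W i)ᗮ v : V)‖ ≤ M := hM i
      _ ≤ max M 0 := le_max_left _ _
      _ < lam := by rw [hlam]; linarith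
  have := (div_lt_iff₀ (hPvpos i)).mp hlt
  linarith
end

section
/- Let V be a finite-dimensional real inner product space, let W_1, ..., W_k be linear subspaces of V, let K ⊆ V be a compact subset, and let v ∈ V be a nonzero vector with v ∉ W_i for all 1 ≤ i ≤ k. Then there exists λ₀ ∈ ℝ such that for every real λ ≥ λ₀ and every x ∈ K, the vector x + λ • v does not belong to any W_i; that is, K + λv ⊆ V \ (W_1 ∪ ... ∪ W_k) for all λ ≥ λ₀. -/
/-- **Translation lemma, strengthened form**: for all sufficiently large `λ`,
the translate `K + λ • v` of the compact set `K` avoids each of the subspaces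
`W 1, ..., W k`, provided the nonzero vector `v` lies in none of them. -/
theorem translate_compact_avoids_subspaces_eventually
    {V : Type*} [NormedAddCommGroup V] [InnerProductSpace ℝ V] [FiniteDimensional ℝ V]
    {k : ℕ} (W : Fin k → Submodule ℝ V)
    (K : Set V) (hK : IsCompact K)
    (v : V) (hv : v ≠ 0) (hvW : ∀ i, v ∉ W i) :
    ∃ lam₀ : ℝ, ∀ lam : ℝ, lam₀ ≤ lam → ∀ x ∈ K, ∀ i, x + lam • v ∉ W i := by
  -- projection of v onto (W i)ᗮ is nonzero
  set c : Fin k → ℝ := fun i => ‖(Submodule.orthogonalProjectionOnto (W i)ᗮ v : V)‖ with hc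
  have hcpos : ∀ i, 0 < c i := by
    intro i
    rcases (norm_nonneg ((Submodule.orthogonalProjectionOnto (W i)ᗮ v : V))).lt_or_eq with h | h
    · exact h
    · exfalso
      apply hvW i
      have : Submodule.orthogonalProjectionOnto (W i)ᗮ v = 0 := by
        ext1; simpa using (norm_eq_zero.mp h.symm)
      have := Submodule.orthogonalProjectionOnto_eq_zero_iff.mp this
      rwa [Submodule.orthogonal_orthogonal] at this
  obtain ⟨M, hM⟩ := hK.isBounded.exists_norm_le
  set M' : ℝ := max M 0 with hM'
  have hM'0 : 0 ≤ M' := le_max_right _ _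
  refine ⟨1 + ∑ i, M' / c i, fun lam hlam x hx i hmem => ?_⟩
  -- project the membership
  have hproj : Submodule.orthogonalProjectionOnto (W i)ᗮ (x + lam • v) = 0 := by
    apply Submodule.orthogonalProjectionOnto_eq_zero_iff.mpr
    rwa [Submodule.orthogonal_orthogonal]
  have hlin : (Submodule.orthogonalProjectionOnto (W i)ᗮ x : V) + lam • (Submodule.orthogonalProjectionOnto (W i)ᗮ v : V) = 0 := by
    have := congrArg (Subtype.val) hproj
    simpa [map_add, map_smul] using this
  have hnorm : lam * c i = ‖(Submodule.orthogonalProjectionOnto (W i)ᗮ x : V)‖ := by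
    have h1 : lam • (Submodule.orthogonalProjectionOnto (W i)ᗮ v : V) = -(Submodule.orthogonalProjectionOnto (W i)ᗮ x : V) := by
      linear_combination (norm := module) hlin
    have h2 := congrArg norm h1
    have hlam0 : 0 ≤ lam := by
      refine le_trans ?_ hlam
      positivity
    rw [norm_smul, norm_neg, Real.norm_eq_abs, abs_of_nonneg hlam0] at h2
    exact h2
  have hxle : ‖(Submodule.orthogonalProjectionOnto (W i)ᗮ x : V)‖ ≤ M' := by
    calc ‖(Submodule.orthogonalProjectionOnto (W i)ᗮ x : V)‖ ≤ ‖x‖ := by simpa using ((Submodule.orthogonalProjectionOnto (W i)ᗮ).le_opNorm x).trans (mul_le_of_le_one_left (norm_nonneg x) (Submodule.orthogonalProjectionOnto_norm_le _))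
      _ ≤ M := hM x hx
      _ ≤ M' := le_max_left _ _
  -- but lam * c i > M'
  have hgt : M' < lam * c i := by
    have hsum : M' / c i ≤ ∑ j, M' / c j :=
      Finset.single_le_sum (f := fun j => M' / c j)
        (fun j _ => div_nonneg hM'0 (hcpos j).le) (Finset.mem_univ i)
    have : M' / c i < lam := lt_of_le_of_lt hsum (by linarith)
    calc M' = (M' / c i) * c i := by rw [div_mul_cancel₀ _ (hcpos i).ne']
      _ < lam * c i := by exact mul_lt_mul_of_pos_right this (hcpos i)
  rw [hnorm] at hgt
  linarith
end

section
/- Let 𝔨 be a finite-dimensional real Lie algebra whose Killing form B_𝔨 is nondegenerate, let 𝔥 ⊆ 𝔨 be a Lie subalgebra such that the restriction B_𝔥 of B_𝔨 to 𝔥 is nondegenerate, and let 𝔪 = { X ∈ 𝔨 : B_𝔨(X, Y) = 0 for all Y ∈ 𝔥 }, so that 𝔨 = 𝔥 ⊕ 𝔪; denote by P_𝔥 : 𝔨 → 𝔥 the projection onto 𝔥 along 𝔪, and for Z ∈ 𝔨 write Z_𝔥 = P_𝔥(Z). Let 𝔤 be a Lie algebra, λ : 𝔥 → 𝔤 a linear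 map, and v ∈ 𝔤* a linear functional; let X_v^λ ∈ 𝔥 be the unique element satisfying B_𝔥(X_v^λ, Y) = v(λ(Y)) for all Y ∈ 𝔥. Then for all X, Y ∈ 𝔪 one has v(λ(⁅X, Y⁆_𝔥)) = B_𝔨(X_v^λ, ⁅X, Y⁆). Consequently, the bilinear form (X, Y) ↦ v(λ(⁅X, Y⁆_𝔥)) on 𝔪 is nondegenerate if and only if the bilinear form (X, Y) ↦ B_𝔨(X_v^λ, ⁅X, Y⁆) on 𝔪 is nondegenerate. -/
/-- **Computational content of Theorem 5.4 of the paper.**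
Let `𝔨` be a finite-dimensional real Lie algebra with nondegenerate Killing
form `B_𝔨`, `𝔥 ⊆ 𝔨` a subalgebra on which `B_𝔨` restricts nondegenerately, and
`𝔪` the `B_𝔨`-orthogonal complement of `𝔥`, so that `𝔨 = 𝔥 ⊕ 𝔪`; let
`P : 𝔨 → 𝔨` be the projection onto `𝔥` along `𝔪` (so `Z_𝔥 = P Z`).  Let `𝔤` be
a Lie algebra, `λ : 𝔥 → 𝔤` a linear map, `v ∈ 𝔤*`, and `X_v^λ ∈ 𝔥` the unique
element with `B_𝔨(X_v^λ, Y) = v(λ Y)` for all `Y ∈ 𝔥`.  Then for `X, Y ∈ 𝔪`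
one has `v(λ(⁅X,Y⁆_𝔥)) = B_𝔨(X_v^λ, ⁅X,Y⁆)`; consequently the bilinear form
`(X,Y) ↦ v(λ(⁅X,Y⁆_𝔥))` on `𝔪` is nondegenerate iff the form
`(X,Y) ↦ B_𝔨(X_v^λ, ⁅X,Y⁆)` on `𝔪` is. -/
theorem fatness_form_eq_killing_form
    {k g : Type*} [LieRing k] [LieAlgebra ℝ k] [Module.Finite ℝ k]
    [LieRing g] [LieAlgebra ℝ g]
    (hk_nondeg : ∀ X : k, (∀ Y : k, killingForm ℝ k X Y = 0) → X = 0)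
    (H : LieSubalgebra ℝ k)
    (hH_nondeg : ∀ X ∈ H, (∀ Y ∈ H, killingForm ℝ k X Y = 0) → X = 0)
    (m : Submodule ℝ k)
    (hm : ∀ X : k, X ∈ m ↔ ∀ Y ∈ H, killingForm ℝ k X Y = 0)
    (P : k →ₗ[ℝ] k) (hPmem : ∀ Z : k, P Z ∈ H) (hPcompl : ∀ Z : k, Z - P Z ∈ m)
    (lam : H →ₗ[ℝ] g) (v : g →ₗ[ℝ] ℝ)
    (Xv : k) (hXvmem : Xv ∈ H)
    (hXv : ∀ Y : H, killingForm ℝ k Xv (Y : k) = v (lam Y)) :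
    (∀ X ∈ m, ∀ Y ∈ m,
        v (lam ⟨P ⁅X, Y⁆, hPmem ⁅X, Y⁆⟩) = killingForm ℝ k Xv ⁅X, Y⁆) ∧
      ((∀ X ∈ m, (∀ Y ∈ m, v (lam ⟨P ⁅X, Y⁆, hPmem ⁅X, Y⁆⟩) = 0) → X = 0) ↔
        (∀ X ∈ m, (∀ Y ∈ m, killingForm ℝ k Xv ⁅X, Y⁆ = 0) → X = 0)) := by
  have key : ∀ X ∈ m, ∀ Y ∈ m,
      v (lam ⟨P ⁅X, Y⁆, hPmem ⁅X, Y⁆⟩) = killingForm ℝ k Xv ⁅X, Y⁆ := by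
    intro X hX Y hY
    have h1 : killingForm ℝ k Xv (P ⁅X, Y⁆) = v (lam ⟨P ⁅X, Y⁆, hPmem ⁅X, Y⁆⟩) :=
      hXv ⟨P ⁅X, Y⁆, hPmem ⁅X, Y⁆⟩
    have h2 : killingForm ℝ k Xv (⁅X, Y⁆ - P ⁅X, Y⁆) = 0 := by
      rw [LieModule.traceForm_comm]
      exact (hm _).mp (hPcompl ⁅X, Y⁆) Xv hXvmem
    have h3 : killingForm ℝ k Xv ⁅X, Y⁆
        = killingForm ℝ k Xv (P ⁅X, Y⁆) + killingForm ℝ k Xv (⁅X, Y⁆ - P ⁅X, Y⁆) := by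
      rw [← map_add, add_sub_cancel]
    rw [h3, h1, h2, add_zero]
  refine ⟨key, ?_⟩
  constructor
  · intro h X hX hY
    exact h X hX fun Y hYm => by rw [key X hX Y hYm]; exact hY Y hYm
  · intro h X hX hY
    exact h X hX fun Y hYm => by rw [← key X hX Y hYm]; exact hY Y hYm
end
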